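/- Let q1 be a UCQ with disjuncts q_{1,1},...,q_{1,k} and q2 a UCQ with disjuncts q_{2,1},...,q_{2,m}, all over the same schema S and of the same arity. Then q1 is contained in q2 if and only if for every disjunct q_{1,i} there is a disjunct q_{2,j} such that there is a homomorphism from q_{2,j} to q_{1,i}. -/

import Mathlib

/-- A relational schema: a collection of relation names with arities. -/
structure Schema : Type 1 where
  Rel : Type
  arity : Rel → ℕ

/-- A fact over schema `S` with constants from `C`. -/
def Fct (S : Schema) (C : Type) : Type := (R : S.Rel) × (Fin (S.arity R) → C)

/-- Apply a function on constants to a fact. -/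
def mapFct {S : Schema} {C D : Type} (h : C → D) (f : Fct S C) : Fct S D :=
  ⟨f.1, h ∘ f.2⟩

/-- A database over schema `S` with constants from `C`: a set of facts. -/
abbrev DB (S : Schema) (C : Type) : Type := Set (Fct S C)

/-- A conjunctive query over schema `S` with `n` answer variables. -/
structure CQ (S : Schema) (n : ℕ) : Type 1 where
  V : Type
  ansVar : Fin n → V
  atoms : DB S V

/-- `t` is an answer to the CQ `q` on the database `D`. -/
def cqAns {S : Schema} {n : ℕ} (q : CQ S n) {C : Type} (D : DB S C) (t : Fin n → C) : Prop :=
  ∃ h : q.V → C, (∀ a ∈ q.atoms, mapFct h a ∈ D) ∧ h ∘ q.ansVar = t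

/-- A (possibly infinitary) union of conjunctive queries. -/
abbrev UCQ (S : Schema) (n : ℕ) : Type 1 := Set (CQ S n)

/-- `t` is an answer to the UCQ `q` on the database `D`. -/
def ucqAns {S : Schema} {n : ℕ} (q : UCQ S n) {C : Type} (D : DB S C) (t : Fin n → C) : Prop :=
  ∃ p ∈ q, cqAns p D t

/-- Containment of UCQs over all databases of the schema. -/
def Contained {S : Schema} {n : ℕ} (q1 q2 : UCQ S n) : Prop :=
  ∀ (C : Type) (D : DB S C) (t : Fin n → C), ucqAns q1 D t → ucqAns q2 D t

/-- A homomorphism from the CQ `q` to the CQ `p` (preserving atoms and answer variables). -/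
def CQHom {S : Schema} {n : ℕ} (q p : CQ S n) : Prop :=
  ∃ h : q.V → p.V, (∀ a ∈ q.atoms, mapFct h a ∈ p.atoms) ∧ h ∘ q.ansVar = p.ansVar
theorem ucq_containment_iff_hom (S : Schema) (n : ℕ) (q1 q2 : List (CQ S n)) :
    (∀ (C : Type) (D : DB S C) (t : Fin n → C),
        (∃ p ∈ q1, cqAns p D t) → ∃ p ∈ q2, cqAns p D t) ↔
      ∀ p1 ∈ q1, ∃ p2 ∈ q2, CQHom p2 p1 := by
  constructor
  · intro hc p1 hp1
    obtain ⟨p2, hp2, h, hhom, hans⟩ :=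
      hc p1.V p1.atoms p1.ansVar ⟨p1, hp1, id, fun a ha => ha, rfl⟩
    exact ⟨p2, hp2, h, hhom, hans⟩
  · rintro hh C D t ⟨p1, hp1, g, hg, hgt⟩
    obtain ⟨p2, hp2, h, hhom, hans⟩ := hh p1 hp1
    refine ⟨p2, hp2, g ∘ h, fun a ha => ?_, ?_⟩
    · have := hg _ (hhom a ha)
      exact this
    · rw [← hgt, ← hans]; rfl
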